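/- Theorem 3.1(i) (MRA representation of MTD patches): Under the 1D MTD model with geometric placements, the sequence of patches {Z_k}_{k=1}^M extracted from the measurement Z can be written as Z_k = P(g_k · X̄) + ε_k, where the group elements g_k = (g_k^{(1)}, g_k^{(2)}) belong to G = ℤ_{2L} × ℤ_{2L} and are determined by the placement parameters {t_i}, X̄ = (X̃, X̃) is the lifted zero-padded signal, P is the projection operator, and {ε_k}_{k=1}^M are i.i.d. N(0, σ²I_L) noise vectors. -/

import Mathlib

/-!
Theorem 3.1(i) of "Sample Complexity Analysis of Multi-Target Detection via Markovian
and Hard-Core Multi-Reference Alignment": MRA representation of the MTD patches.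

Under the 1D MTD model with geometric placements, the patches `Z_k` extracted from the
measurement `Z` can be written as `Z_k = P(g_k · X̄) + ε_k`, where the group elements
`g_k ∈ G = ℤ_{2L} × ℤ_{2L}` are determined by the placement parameters `{t_i}`,
`X̄ = (X̃, X̃)` is the lifted zero-padded signal, `P` is the projection operator, and the
`ε_k` are i.i.d. `N(0, σ² I_L)` noise vectors.
-/

open MeasureTheory ProbabilityTheory Filter Finset
open scoped ENNReal ProbabilityTheory

noncomputable section

namespace MTD1D

/-- The group `G = ℤ_{2L} × ℤ_{2L}`. -/
abbrev G (L : ℕ) := ZMod (2*L) × ZMod (2*L)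

/-- The zero-padded signal `X̃ = (X, 0_L) ∈ ℝ^{2L}`, indexed by `ℤ_{2L}`. -/
def padSig (L : ℕ) (X : Fin L → ℝ) : ZMod (2*L) → ℝ :=
  fun ξ => if h : ξ.val < L then X ⟨ξ.val, h⟩ else 0

/-- The lifted signal `X̄ = (X̃, X̃)`. -/
def XbarSig (L : ℕ) (X : Fin L → ℝ) : (ZMod (2*L) → ℝ) × (ZMod (2*L) → ℝ) :=
  (padSig L X, padSig L X)

/-- Cyclic shift: `(g · v)[ξ] = v[ξ - g mod 2L]`. -/
def shiftSig (L : ℕ) (g : ZMod (2*L)) (v : ZMod (2*L) → ℝ) : ZMod (2*L) → ℝ :=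
  fun ξ => v (ξ - g)

/-- Componentwise action of `G = ℤ_{2L} × ℤ_{2L}` on `ℝ^{2L} × ℝ^{2L}`. -/
def actSig (L : ℕ) (g : G L) (v : (ZMod (2*L) → ℝ) × (ZMod (2*L) → ℝ)) :
    (ZMod (2*L) → ℝ) × (ZMod (2*L) → ℝ) :=
  (shiftSig L g.1 v.1, shiftSig L g.2 v.2)

/-- Projection `P(X̃₀, X̃₁) = P₀X̃₀ + P₁X̃₁`: the last `L` entries of `X̃₀`
plus the first `L` entries of `X̃₁`. -/
def projSig (L : ℕ) (v : (ZMod (2*L) → ℝ) × (ZMod (2*L) → ℝ)) : Fin L → ℝ :=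
  fun ξ => v.1 ((ξ.val : ZMod (2*L)) + (L : ZMod (2*L))) + v.2 (ξ.val : ZMod (2*L))

/-- Zero-padded signal evaluation on ℕ (used to zero-pad placed signal copies). -/
def padNat (L : ℕ) (X : Fin L → ℝ) (n : ℕ) : ℝ :=
  if h : n < L then X ⟨n, h⟩ else 0

/-- The index in the long measurement of the `ξ`-th pixel of the `k`-th patch. -/
def patchIdx (L M : ℕ) (k : Fin M) (ξ : Fin L) : Fin (L*M) :=
  ⟨k.val * L + ξ.val, by
    have hk : k.val + 1 ≤ M := k.isLt
    calc k.val * L + ξ.val < k.val * L + L := by omega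
      _ = (k.val + 1) * L := by ring
      _ ≤ M * L := Nat.mul_le_mul hk (le_refl L)
      _ = L * M := Nat.mul_comm M L⟩

/-- The law `N(0, σ² I_n)` on `ℝ^n`. -/
def gaussPi (n : ℕ) (σ : ℝ) : Measure (Fin n → ℝ) :=
  Measure.pi fun _ => gaussianReal 0 (σ^2).toNNReal

/-! ### Auxiliary lemmas -/

lemma patch_div {L k ξ : ℕ} (hL : 0 < L) (hξ : ξ < L) : (k * L + ξ) / L = k := by
  rw [add_comm, Nat.add_mul_div_right _ _ hL, Nat.div_eq_of_lt hξ, zero_add]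

lemma patch_mod {L k ξ : ℕ} (hξ : ξ < L) : (k * L + ξ) % L = ξ := by
  rw [add_comm, Nat.add_mul_mod_self_right, Nat.mod_eq_of_lt hξ]

lemma padSig_natCast (L : ℕ) (X : Fin L → ℝ) {m : ℕ} (hm : m < 2 * L) :
    padSig L X ((m : ℕ) : ZMod (2 * L)) = padNat L X m := by
  have : NeZero (2 * L) := ⟨by omega⟩
  simp only [padSig, padNat, ZMod.val_natCast_of_lt hm]

lemma padNat_eq_zero (L : ℕ) (X : Fin L → ℝ) {m : ℕ} (hm : L ≤ m) : padNat L X m = 0 := by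
  simp only [padNat]; rw [dif_neg (by omega)]

/-- **Theorem 3.1(i)**: the MTD patches admit an MRA representation
`Z_k = P(g_k · X̄) + ε_k`, with `g_k ∈ ℤ_{2L} × ℤ_{2L}` determined by the placements
`{t_i}` and `ε_k` i.i.d. `N(0, σ² I_L)`. -/
theorem mtd_patches_MRA_representation
    (L M : ℕ) (hL : 0 < L) (hM : 0 < M) (σ lam : ℝ) (hσ : 0 < σ)
    (hlam : lam ∈ Set.Ioo (0:ℝ) 1)
    {Ω : Type} [MeasureSpace Ω] [IsProbabilityMeasure (ℙ : Measure Ω)]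
    (X : Fin L → ℝ)
    -- i.i.d. geometric gaps between consecutive signal occurrences
    (gap : ℕ → Ω → ℕ) (hgapMeas : ∀ i, Measurable (gap i))
    (hgapLaw : ∀ i k, ℙ {ω | gap i ω = k} = ENNReal.ofReal ((1-lam)^k * lam))
    (hgapIndep : iIndepFun gap ℙ)
    -- placement positions: t_1 ~ Ge(λ), t_i − t_{i−1} − L ~ Ge(λ)
    (t : ℕ → Ω → ℕ)
    (ht0 : ∀ ω, t 0 ω = gap 0 ω)
    (htS : ∀ i ω, t (i+1) ω = t i ω + L + gap (i+1) ω)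
    -- measurement noise ε ~ N(0, σ² I_{LM}), independent of the placements
    (ε : Ω → Fin (L*M) → ℝ) (hεMeas : Measurable ε)
    (hεLaw : Measure.map ε ℙ = gaussPi (L*M) σ)
    (hεIndep : IndepFun (fun ω => fun i => gap i ω) ε ℙ)
    -- the MTD measurement Z = Σ_i S(t_i) * X + ε (occurrences with t_i > L(M−1)
    -- contribute nothing inside the window, matching q = max{i : t_i ≤ L(M−1)})
    (Z : Ω → Fin (L*M) → ℝ)
    (hZ : ∀ ω ξ, Z ω ξ =
      (∑ i ∈ Finset.range M,
        if t i ω ≤ ξ.val then padNat L X (ξ.val - t i ω) else 0) + ε ω ξ) :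
    -- conclusion: MRA representation of the patches
    ∃ (g : Fin M → Ω → G L) (εp : Fin M → Ω → Fin L → ℝ),
      (∀ k, ∃ φ : (ℕ → ℕ) → G L, ∀ ω, g k ω = φ (fun i => t i ω)) ∧
      (∀ k ω ξ, Z ω (patchIdx L M k ξ)
          = projSig L (actSig L (g k ω) (XbarSig L X)) ξ + εp k ω ξ) ∧
      (∀ k, Measurable (εp k)) ∧
      (∀ k, Measure.map (εp k) ℙ = gaussPi L σ) ∧
      iIndepFun εp ℙ := by
  classical
  have h2L : 0 < 2 * L := by omega
  haveI : NeZero (2 * L) := ⟨by omega⟩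
  -- monotonicity of the placements
  have htmono : ∀ ω i j, i < j → t i ω + L ≤ t j ω := by
    intro ω i j hij
    induction j with
    | zero => omega
    | succ j ih =>
      have hS := htS j ω
      rcases Nat.lt_succ_iff_lt_or_eq.mp hij with h | h
      · have := ih h; omega
      · subst h; omega
  -- the group elements, as functions of the placements
  let tl : ℕ → (ℕ → ℕ) → Prop := fun k s => ∃ i, i < M ∧ k*L < s i + L ∧ s i < k*L
  let hd : ℕ → (ℕ → ℕ) → Prop := fun k s => ∃ i, i < M ∧ k*L ≤ s i ∧ s i < k*L + L
  let φ : ℕ → (ℕ → ℕ) → G L := fun k s =>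
    (if h : tl k s then ((s h.choose + L - k*L : ℕ) : ZMod (2*L)) else 0,
     if h : hd k s then ((s h.choose - k*L : ℕ) : ZMod (2*L)) else (L : ZMod (2*L)))
  -- the noise patches
  let J : Ω → Fin M → Fin L → ℝ := fun ω k ξ => ε ω (patchIdx L M k ξ)
  have hJmeas : Measurable J :=
    measurable_pi_lambda _ fun k => measurable_pi_lambda _ fun ξ =>
      (measurable_pi_apply _).comp hεMeas
  have hJkmeas : ∀ k : Fin M, Measurable (fun ω => J ω k) := fun k =>
    (measurable_pi_apply k).comp hJmeas
  -- the index equivalence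
  have hlt1 : ∀ (j : Fin (L*M)), j.val / L < M := by
    intro j
    exact Nat.div_lt_of_lt_mul j.isLt
  let dk : Fin (L*M) → Fin M := fun j => ⟨j.val / L, hlt1 j⟩
  let dξ : Fin (L*M) → Fin L := fun j => ⟨j.val % L, Nat.mod_lt _ hL⟩
  have hdk : ∀ (k : Fin M) (ξ : Fin L), dk (patchIdx L M k ξ) = k := by
    intro k ξ
    apply Fin.ext
    exact patch_div hL ξ.isLt
  have hdξ : ∀ (k : Fin M) (ξ : Fin L), dξ (patchIdx L M k ξ) = ξ := by
    intro k ξ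
    apply Fin.ext
    exact patch_mod ξ.isLt
  have hre : ∀ j : Fin (L*M), patchIdx L M (dk j) (dξ j) = j := by
    intro j
    apply Fin.ext
    show (j.val / L) * L + j.val % L = j.val
    rw [mul_comm]
    exact Nat.div_add_mod _ _
  let eqv : Fin M × Fin L ≃ Fin (L*M) :=
    { toFun := fun p => patchIdx L M p.1 p.2
      invFun := fun j => (dk j, dξ j)
      left_inv := fun p => by simp [hdk, hdξ]
      right_inv := fun j => hre j }
  -- the one-dimensional Gaussian
  set γ : Measure ℝ := gaussianReal 0 (σ^2).toNNReal with hγ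
  haveI hγp : IsProbabilityMeasure γ := by rw [hγ]; infer_instance
  haveI hgp : ∀ n : ℕ, IsProbabilityMeasure (gaussPi n σ) := fun n => by
    unfold gaussPi; infer_instance
  -- joint law of the noise patches
  have hJlaw : Measure.map J ℙ = Measure.pi (fun _ : Fin M => gaussPi L σ) := by
    refine (Measure.pi_eq_generateFrom
      (C := fun _ => Set.pi Set.univ ''
        Set.pi Set.univ fun _ : Fin L => { s : Set ℝ | MeasurableSet s })
      (fun _ => generateFrom_pi) (fun _ => isPiSystem_pi) (fun _ => ?_) ?_).symm
    · refine ⟨fun _ => Set.univ, fun _ => ?_, fun _ => ?_, ?_⟩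
      · refine ⟨fun _ => Set.univ, fun _ _ => ?_, by simp⟩
        simp only [Set.mem_setOf_eq]
        exact MeasurableSet.univ
      · rw [measure_univ]; exact ENNReal.one_lt_top
      · exact Set.iUnion_const Set.univ
    · intro B hB
      choose s hs hBs using hB
      have hsm : ∀ (k : Fin M) (ξ : Fin L), MeasurableSet (s k ξ) := by
        intro k ξ; exact hs k ξ (Set.mem_univ ξ)
      have hBm : ∀ k, MeasurableSet (B k) := by
        intro k; rw [← hBs k]; exact MeasurableSet.univ_pi fun ξ => hsm k ξ
      set S : Fin (L*M) → Set ℝ := fun j => s (dk j) (dξ j) with hS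
      have hSm : ∀ j, MeasurableSet (S j) := fun j => hsm _ _
      have hpre : J ⁻¹' (Set.univ.pi B) = ε ⁻¹' (Set.univ.pi S) := by
        ext ω
        simp only [Set.mem_preimage, Set.mem_pi, Set.mem_univ, forall_true_left]
        constructor
        · intro h j
          have hk := h (dk j)
          rw [← hBs (dk j)] at hk
          have h2 : ε ω (patchIdx L M (dk j) (dξ j)) ∈ s (dk j) (dξ j) :=
            hk (dξ j) (Set.mem_univ _)
          rwa [hre j] at h2
        · intro h k
          rw [← hBs k]
          intro ξ _
          have := h (patchIdx L M k ξ)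
          simpa only [hS, hdk, hdξ] using this
      rw [Measure.map_apply hJmeas (MeasurableSet.univ_pi hBm), hpre,
        ← Measure.map_apply hεMeas (MeasurableSet.univ_pi hSm), hεLaw]
      show Measure.pi (fun _ : Fin (L*M) => γ) _ = _
      rw [Measure.pi_pi]
      have hprod : ∏ j : Fin (L*M), γ (S j) = ∏ p : Fin M × Fin L, γ (S (eqv p)) :=
        (Fintype.prod_equiv eqv _ _ fun p => rfl).symm
      rw [hprod]
      rw [Fintype.prod_prod_type]
      refine Finset.prod_congr rfl fun k _ => ?_
      rw [← hBs k]
      show ∏ ξ : Fin L, γ (S (patchIdx L M k ξ)) = Measure.pi (fun _ : Fin L => γ) _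
      rw [Measure.pi_pi]
      refine Finset.prod_congr rfl fun ξ _ => ?_
      simp only [hS, hdk, hdξ]
  -- marginal laws
  have hmap_eval : ∀ k : Fin M,
      (Measure.pi (fun _ : Fin M => gaussPi L σ)).map (Function.eval k) = gaussPi L σ := by
    intro k
    ext A hA
    rw [Measure.map_apply (measurable_pi_apply k) hA]
    have : Function.eval k ⁻¹' A =
        Set.univ.pi (fun j : Fin M => if j = k then A else Set.univ) := by
      ext f
      simp only [Set.mem_preimage, Set.mem_pi, Set.mem_univ, forall_true_left, Function.eval]
      constructor
      · intro h j
        by_cases hj : j = k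
        · subst hj; simpa using h
        · simp [hj]
      · intro h
        have := h k
        simpa using this
    rw [this, Measure.pi_pi]
    have : ∀ j : Fin M, (gaussPi L σ) (if j = k then A else Set.univ)
        = if j = k then (gaussPi L σ) A else 1 := by
      intro j; split <;> simp
    simp_rw [this]
    exact Fintype.prod_ite_eq' k _
  have hmarg : ∀ k : Fin M, Measure.map (fun ω => J ω k) ℙ = gaussPi L σ := by
    intro k
    have : (fun ω => J ω k) = Function.eval k ∘ J := rfl
    rw [this, ← Measure.map_map (measurable_pi_apply k) hJmeas, hJlaw, hmap_eval k]
  -- now assemble the witnesses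
  refine ⟨fun k ω => φ k.val (fun i => t i ω), fun k ω => J ω k,
    fun k => ⟨φ k.val, fun ω => rfl⟩, ?_, hJkmeas, hmarg, ?_⟩
  · -- decomposition of the patches
    intro k ω ξ
    rw [hZ]
    have hproj : projSig L (actSig L (φ k.val (fun i => t i ω)) (XbarSig L X)) ξ
        = padSig L X ((ξ.val : ZMod (2*L)) + (L : ZMod (2*L))
            - (φ k.val (fun i => t i ω)).1)
          + padSig L X ((ξ.val : ZMod (2*L)) - (φ k.val (fun i => t i ω)).2) := rfl
    rw [hproj]
    have hidx : (patchIdx L M k ξ).val = k.val * L + ξ.val := rfl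
    rw [hidx]
    congr 1
    -- now prove the deterministic identity about the signal part
    set s : ℕ → ℕ := fun i => t i ω with hsdef
    set n : ℕ := k.val * L + ξ.val with hn
    have hξL : ξ.val < L := ξ.isLt
    have hkM : k.val < M := k.isLt
    have hkLn : k.val * L ≤ n := by omega
    have hsep : ∀ i j, i < j → s i + L ≤ s j := fun i j hij => htmono ω i j hij
    have htluniq : ∀ i j, (k.val*L < s i + L ∧ s i < k.val*L) →
        (k.val*L < s j + L ∧ s j < k.val*L) → i = j := by
      intro i j hi hj
      by_contra hne
      rcases Nat.lt_or_ge i j with h | h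
      · have := hsep i j h; omega
      · have : j < i := by omega
        have := hsep j i this; omega
    have hhduniq : ∀ i j, (k.val*L ≤ s i ∧ s i < k.val*L + L) →
        (k.val*L ≤ s j ∧ s j < k.val*L + L) → i = j := by
      intro i j hi hj
      by_contra hne
      rcases Nat.lt_or_ge i j with h | h
      · have := hsep i j h; omega
      · have : j < i := by omega
        have := hsep j i this; omega
    set F : ℕ → ℝ := fun i => if s i ≤ n then padNat L X (n - s i) else 0 with hF
    have hFzero : ∀ i, i < M → ¬ (s i ≤ n ∧ n < s i + L) → F i = 0 := by
      intro i _ hcon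
      simp only [hF]
      by_cases h1 : s i ≤ n
      · rw [if_pos h1]
        exact padNat_eq_zero L X (by omega)
      · rw [if_neg h1]
    -- value of the first (tail) component
    have hA : padSig L X ((ξ.val : ZMod (2*L)) + (L : ZMod (2*L))
        - (φ k.val s).1)
        = if h : tl k.val s then F h.choose else 0 := by
      by_cases hT : tl k.val s
      · obtain ⟨hi0M, h1, h2⟩ := hT.choose_spec
        have hφ1 : (φ k.val s).1 = ((s hT.choose + L - k.val*L : ℕ) : ZMod (2*L)) := by
          simp only [φ]
          rw [dif_pos hT]
        rw [hφ1, dif_pos hT]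
        have hcast : (ξ.val : ZMod (2*L)) + (L : ZMod (2*L))
            - ((s hT.choose + L - k.val*L : ℕ) : ZMod (2*L))
            = ((ξ.val + (k.val*L - s hT.choose) : ℕ) : ZMod (2*L)) := by
          push_cast [Nat.cast_sub (show k.val*L ≤ s hT.choose + L by omega),
            Nat.cast_sub (show s hT.choose ≤ k.val*L by omega)]
          ring
        rw [hcast, padSig_natCast L X (by omega)]
        simp only [hF]
        rw [if_pos (by omega)]
        congr 1
        omega
      · have hφ1 : (φ k.val s).1 = 0 := by
          simp only [φ]
          rw [dif_neg hT]
        rw [hφ1, dif_neg hT, sub_zero]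
        have : (ξ.val : ZMod (2*L)) + (L : ZMod (2*L))
            = ((ξ.val + L : ℕ) : ZMod (2*L)) := by push_cast; ring
        rw [this, padSig_natCast L X (by omega)]
        exact padNat_eq_zero L X (by omega)
    -- value of the second (head) component
    have hB : padSig L X ((ξ.val : ZMod (2*L)) - (φ k.val s).2)
        = if h : hd k.val s then F h.choose else 0 := by
      by_cases hH : hd k.val s
      · obtain ⟨hi1M, h1, h2⟩ := hH.choose_spec
        have hφ2 : (φ k.val s).2 = ((s hH.choose - k.val*L : ℕ) : ZMod (2*L)) := by
          simp only [φ]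
          rw [dif_pos hH]
        rw [hφ2, dif_pos hH]
        by_cases hbξ : s hH.choose - k.val*L ≤ ξ.val
        · have hcast : (ξ.val : ZMod (2*L)) - ((s hH.choose - k.val*L : ℕ) : ZMod (2*L))
              = ((ξ.val - (s hH.choose - k.val*L) : ℕ) : ZMod (2*L)) := by
            push_cast [Nat.cast_sub (show s hH.choose - k.val*L ≤ ξ.val by omega),
              Nat.cast_sub (show k.val*L ≤ s hH.choose by omega)]
            ring
          rw [hcast, padSig_natCast L X (by omega)]
          simp only [hF]
          rw [if_pos (by omega)]
          congr 1
          omega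
        · have h2L0 : ((2*L : ℕ) : ZMod (2*L)) = 0 := ZMod.natCast_self _
          have hcast : (ξ.val : ZMod (2*L)) - ((s hH.choose - k.val*L : ℕ) : ZMod (2*L))
              = ((2*L + ξ.val - (s hH.choose - k.val*L) : ℕ) : ZMod (2*L)) := by
            push_cast [Nat.cast_sub (show s hH.choose - k.val*L ≤ 2*L + ξ.val by omega),
              Nat.cast_sub (show k.val*L ≤ s hH.choose by omega)] at h2L0 ⊢
            linear_combination -h2L0
          rw [hcast, padSig_natCast L X (by omega)]
          rw [padNat_eq_zero L X (by omega)]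
          simp only [hF]
          rw [if_neg (by omega)]
      · have hφ2 : (φ k.val s).2 = (L : ZMod (2*L)) := by
          simp only [φ]
          rw [dif_neg hH]
        rw [hφ2, dif_neg hH]
        have h2L0 : ((2*L : ℕ) : ZMod (2*L)) = 0 := ZMod.natCast_self _
        have : (ξ.val : ZMod (2*L)) - (L : ZMod (2*L))
            = ((ξ.val + L : ℕ) : ZMod (2*L)) := by
          push_cast at h2L0 ⊢
          linear_combination -h2L0
        rw [this, padSig_natCast L X (by omega)]
        exact padNat_eq_zero L X (by omega)
    -- `F i` vanishes except at the tail/head witnesses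
    have hFmain : ∀ i, i < M → F i ≠ 0 →
        (∃ h : tl k.val s, i = h.choose) ∨ (∃ h : hd k.val s, i = h.choose) := by
      intro i hiM hFi
      have h1 : s i ≤ n := by
        by_contra h
        exact hFi (by simp only [hF]; rw [if_neg h])
      have h2 : n < s i + L := by
        by_contra h
        exact hFi (by simp only [hF]; rw [if_pos h1]; exact padNat_eq_zero L X (by omega))
      by_cases h3 : s i < k.val*L
      · left
        have hT : tl k.val s := ⟨i, hiM, by omega, h3⟩
        exact ⟨hT, htluniq i hT.choose ⟨by omega, h3⟩
          ⟨hT.choose_spec.2.1, hT.choose_spec.2.2⟩⟩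
      · right
        have hH : hd k.val s := ⟨i, hiM, by omega, by omega⟩
        exact ⟨hH, hhduniq i hH.choose ⟨by omega, by omega⟩
          ⟨hH.choose_spec.2.1, hH.choose_spec.2.2⟩⟩
    -- compute the sum
    show (∑ i ∈ Finset.range M, F i) = _
    rw [hA, hB]
    by_cases hT : tl k.val s <;> by_cases hH : hd k.val s
    · -- both a tail and a head occurrence
      obtain ⟨hi0M, ht1, ht2⟩ := hT.choose_spec
      obtain ⟨hi1M, hh1, hh2⟩ := hH.choose_spec
      have hne : hT.choose ≠ hH.choose := by
        intro h
        rw [h] at ht2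
        omega
      rw [dif_pos hT, dif_pos hH]
      have hsub : ({hT.choose, hH.choose} : Finset ℕ) ⊆ Finset.range M := by
        intro i hi
        simp only [Finset.mem_insert, Finset.mem_singleton] at hi
        rcases hi with h | h <;> subst h <;> simp [Finset.mem_range, hi0M, hi1M]
      rw [← Finset.sum_subset hsub ?_]
      · rw [Finset.sum_pair hne]
      · intro i hi hni
        simp only [Finset.mem_insert, Finset.mem_singleton, not_or] at hni
        by_contra hFi
        rcases hFmain i (Finset.mem_range.mp hi) hFi with ⟨h, rfl⟩ | ⟨h, rfl⟩
        · exact hni.1 rfl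
        · exact hni.2 rfl
    · -- only a tail occurrence
      obtain ⟨hi0M, ht1, ht2⟩ := hT.choose_spec
      rw [dif_pos hT, dif_neg hH, add_zero]
      refine Finset.sum_eq_single_of_mem _ (Finset.mem_range.mpr hi0M) ?_
      intro i hi hni
      by_contra hFi
      rcases hFmain i (Finset.mem_range.mp hi) hFi with ⟨h, rfl⟩ | ⟨h, _⟩
      · exact hni rfl
      · exact hH h
    · -- only a head occurrence
      obtain ⟨hi1M, hh1, hh2⟩ := hH.choose_spec
      rw [dif_neg hT, dif_pos hH, zero_add]
      refine Finset.sum_eq_single_of_mem _ (Finset.mem_range.mpr hi1M) ?_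
      intro i hi hni
      by_contra hFi
      rcases hFmain i (Finset.mem_range.mp hi) hFi with ⟨h, _⟩ | ⟨h, rfl⟩
      · exact hT h
      · exact hni rfl
    · -- no occurrence meets the patch
      rw [dif_neg hT, dif_neg hH, add_zero]
      refine Finset.sum_eq_zero ?_
      intro i hi
      by_contra hFi
      rcases hFmain i (Finset.mem_range.mp hi) hFi with ⟨h, _⟩ | ⟨h, _⟩
      · exact hT h
      · exact hH h
  · -- independence of the noise patches
    rw [iIndepFun_iff_measure_inter_preimage_eq_mul]
    intro S A hA
    have hAset : ∀ k : Fin M,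
        MeasurableSet (if k ∈ S then A k else (Set.univ : Set (Fin L → ℝ))) := by
      intro k
      split
      · exact hA k ‹k ∈ S›
      · exact MeasurableSet.univ
    have hinter : (⋂ k ∈ S, (fun ω => J ω k) ⁻¹' A k)
        = J ⁻¹' (Set.univ.pi fun k => if k ∈ S then A k else Set.univ) := by
      ext ω
      simp only [Set.mem_iInter, Set.mem_preimage, Set.mem_pi, Set.mem_univ, forall_true_left]
      constructor
      · intro h k
        by_cases hk : k ∈ S
        · rw [if_pos hk]; exact h k hk
        · rw [if_neg hk]; trivial
      · intro h k hk
        have := h k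
        rwa [if_pos hk] at this
    rw [hinter, ← Measure.map_apply hJmeas (MeasurableSet.univ_pi hAset), hJlaw,
      Measure.pi_pi]
    have : ∀ k : Fin M, (gaussPi L σ) (if k ∈ S then A k else Set.univ)
        = if k ∈ S then (gaussPi L σ) (A k) else 1 := by
      intro k; split <;> simp
    simp_rw [this]
    rw [Fintype.prod_ite_mem S (fun k => (gaussPi L σ) (A k))]
    refine Finset.prod_congr rfl fun k hk => ?_
    rw [← Measure.map_apply (hJkmeas k) (hA k hk), hmarg k]

end MTD1D
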